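/- For n ≥ 8 with n not prime and n−1 not prime, the proper power graph of S_n (vertices: nontrivial permutations, edges: one a power of the other) is connected; equivalently, the power graph of S_n is 2-connected. -/

import Mathlib

def properPowerGraph (G : Type*) [Group G] :
    SimpleGraph {g : G // g ≠ 1} where
  Adj x y := x ≠ y ∧ ((∃ m : ℕ, (x : G) = (y : G) ^ m) ∨
    (∃ m : ℕ, (y : G) = (x : G) ^ m))
  symm := by
    constructor
    rintro x y ⟨hxy, h⟩
    exact ⟨hxy.symm, h.symm⟩
  loopless := by constructor; rintro x ⟨hx, -⟩; exact hx rfl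

open Equiv Equiv.Perm List

namespace PPG

lemma reach_of_pow {G : Type*} [Group G] {σ τ : G} (hσ : σ ≠ 1) (hτ : τ ≠ 1)
    {m : ℕ} (h : σ = τ ^ m) :
    (properPowerGraph G).Reachable ⟨σ, hσ⟩ ⟨τ, hτ⟩ := by
  by_cases he : σ = τ
  · subst he
    exact SimpleGraph.Reachable.refl _
  · exact SimpleGraph.Adj.reachable ⟨fun hc => he (congrArg Subtype.val hc), Or.inl ⟨m, h⟩⟩

lemma pow_eq_pow_mod' {G : Type*} [Group G] {g : G} {p : ℕ} (h : g ^ p = 1) (m : ℕ) :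
    g ^ m = g ^ (m % p) := by
  conv_lhs => rw [← Nat.div_add_mod m p]
  rw [pow_add, pow_mul, h, one_pow, one_mul]

lemma ne_one_of_apply {α : Type*} {σ : Equiv.Perm α} {x : α} (h : σ x ≠ x) : σ ≠ 1 := by
  intro hc; rw [hc] at h; simp at h

lemma pow_fix {α : Type*} {σ : Equiv.Perm α} {x : α} (h : σ x = x) (m : ℕ) : (σ ^ m) x = x := by
  induction m with
  | zero => simp
  | succ k ih => rw [pow_succ', Equiv.Perm.mul_apply, ih, h]

variable {α : Type*} [DecidableEq α] [Fintype α]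

/-- our chosen 3-cycle -/
def c3 (x y z : α) : Equiv.Perm α := formPerm [x, y, z]

section c3
variable {x y z : α} (hxy : x ≠ y) (hxz : x ≠ z) (hyz : y ≠ z)
include hxy hxz hyz

lemma c3_nodup : ([x, y, z] : List α).Nodup := by simp [hxy, hxz, hyz]

lemma c3_apply_x : c3 x y z x = y := by
  simp [c3, formPerm, swap_apply_of_ne_of_ne, hxy, hxz, hyz, hxy.symm, hxz.symm, hyz.symm]

lemma c3_apply_y : c3 x y z y = z := by
  simp [c3, formPerm, swap_apply_of_ne_of_ne, hxy, hxz, hyz, hxy.symm, hxz.symm, hyz.symm]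

lemma c3_apply_z : c3 x y z z = x := by
  simp [c3, formPerm, swap_apply_of_ne_of_ne, hxy, hxz, hyz, hxy.symm, hxz.symm, hyz.symm]

lemma c3_pow3 : (c3 x y z) ^ 3 = 1 := by
  have h4 := formPerm_pow_length_eq_one_of_nodup (l := [x,y,z]) (c3_nodup hxy hxz hyz)
  norm_num at h4
  exact h4

lemma c3_ne_one : c3 x y z ≠ 1 :=
  ne_one_of_apply (by rw [c3_apply_x hxy hxz hyz]; exact hxy.symm)

end c3

lemma c3_fix {x y z w : α} (h1 : w ≠ x) (h2 : w ≠ y) (h3 : w ≠ z) : c3 x y z w = w :=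
  formPerm_apply_of_notMem (by simp [h1, h2, h3])

lemma swap_ne {a b : α} (h : a ≠ b) : swap a b ≠ 1 :=
  ne_one_of_apply (by rw [swap_apply_left]; exact h.symm)

lemma swap_sq (a b : α) : (swap a b) ^ 2 = 1 := by
  rw [pow_two, swap_mul_self]

variable {n : ℕ}

lemma card_le_list (l : List (Fin n)) : (l.toFinset).card ≤ l.length := by
  classical exact (List.toFinset_card_le l)

lemma exists_fresh2 (S : Finset (Fin n)) (h : S.card + 2 ≤ n) :
    ∃ a b : Fin n, a ≠ b ∧ a ∉ S ∧ b ∉ S := by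
  have hc : 1 < Sᶜ.card := by
    rw [Finset.card_compl]
    simp only [Fintype.card_fin]
    omega
  obtain ⟨a, ha, b, hb, hab⟩ := Finset.one_lt_card.mp hc
  exact ⟨a, b, hab, Finset.mem_compl.mp ha, Finset.mem_compl.mp hb⟩

lemma exists_fresh3 (S : Finset (Fin n)) (h : S.card + 3 ≤ n) :
    ∃ a b c : Fin n, a ≠ b ∧ a ≠ c ∧ b ≠ c ∧ a ∉ S ∧ b ∉ S ∧ c ∉ S := by
  have hc : 2 < Sᶜ.card := by
    rw [Finset.card_compl]
    simp only [Fintype.card_fin]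
    omega
  obtain ⟨a, b, c, ha, hb, hcc, hab, hac, hbc⟩ := Finset.two_lt_card_iff.mp hc
  exact ⟨a, b, c, hab, hac, hbc, Finset.mem_compl.mp ha, Finset.mem_compl.mp hb,
    Finset.mem_compl.mp hcc⟩

lemma reach_swap_c3 {u v x y z : Fin n} (huv : u ≠ v) (hxy : x ≠ y) (hxz : x ≠ z) (hyz : y ≠ z)
    (hxu : x ≠ u) (hxv : x ≠ v) (hyu : y ≠ u) (hyv : y ≠ v) (hzu : z ≠ u) (hzv : z ≠ v) :
    (properPowerGraph (Equiv.Perm (Fin n))).Reachable ⟨swap u v, swap_ne huv⟩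
      ⟨c3 x y z, c3_ne_one hxy hxz hyz⟩ := by
  set t := swap u v with ht
  set c := c3 x y z with hc
  have hdisj : Equiv.Perm.Disjoint t c := by
    intro w
    by_cases hw : w = u ∨ w = v
    · right
      rcases hw with rfl | rfl
      · exact c3_fix hxu.symm hyu.symm hzu.symm
      · exact c3_fix hxv.symm hyv.symm hzv.symm
    · left
      push_neg at hw
      exact swap_apply_of_ne_of_ne hw.1 hw.2
  have hcomm : Commute t c := hdisj.commute
  set ρ := t * c with hρ
  have ht2 : t ^ 2 = 1 := swap_sq u v
  have hc3 : c ^ 3 = 1 := c3_pow3 hxy hxz hyz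
  have hρ3 : ρ ^ 3 = t := by
    rw [hρ, hcomm.mul_pow, hc3, mul_one, pow_eq_pow_mod' ht2 3]
    norm_num
  have hρ4 : ρ ^ 4 = c := by
    rw [hρ, hcomm.mul_pow, pow_eq_pow_mod' ht2 4, pow_eq_pow_mod' hc3 4]
    norm_num
  have hρne : ρ ≠ 1 := by
    apply ne_one_of_apply (x := u)
    rw [hρ, Equiv.Perm.mul_apply, c3_fix hxu.symm hyu.symm hzu.symm, swap_apply_left]
    exact huv.symm
  exact (reach_of_pow (swap_ne huv) hρne hρ3.symm).trans
    (reach_of_pow (c3_ne_one hxy hxz hyz) hρne hρ4.symm).symm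

lemma notmem4 {a u v u' v' : Fin n} (h : a ∉ ({u, v, u', v'} : Finset (Fin n))) :
    a ≠ u ∧ a ≠ v ∧ a ≠ u' ∧ a ≠ v' := by
  simp only [Finset.mem_insert, Finset.mem_singleton] at h
  push_neg at h
  exact h

lemma reach_swap_swap (hn : 7 ≤ n) {u v u' v' : Fin n} (huv : u ≠ v) (huv' : u' ≠ v') :
    (properPowerGraph (Equiv.Perm (Fin n))).Reachable ⟨swap u v, swap_ne huv⟩
      ⟨swap u' v', swap_ne huv'⟩ := by
  have hcard : ({u, v, u', v'} : Finset (Fin n)).card + 3 ≤ n := by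
    have h1 := Finset.card_insert_le u ({v, u', v'} : Finset (Fin n))
    have h2 := Finset.card_insert_le v ({u', v'} : Finset (Fin n))
    have h3 := Finset.card_insert_le u' ({v'} : Finset (Fin n))
    simp only [Finset.card_singleton] at h1 h2 h3
    omega
  obtain ⟨x, y, z, hxy, hxz, hyz, hx, hy, hz⟩ := exists_fresh3 _ hcard
  obtain ⟨hxu, hxv, hxu', hxv'⟩ := notmem4 hx
  obtain ⟨hyu, hyv, hyu', hyv'⟩ := notmem4 hy
  obtain ⟨hzu, hzv, hzu', hzv'⟩ := notmem4 hz
  exact (reach_swap_c3 huv hxy hxz hyz hxu hxv hyu hyv hzu hzv).trans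
    (reach_swap_c3 huv' hxy hxz hyz hxu' hxv' hyu' hyv' hzu' hzv').symm

lemma reach_c3_swap (hn : 7 ≤ n) {x y z u v : Fin n} (hxy : x ≠ y) (hxz : x ≠ z) (hyz : y ≠ z)
    (huv : u ≠ v) :
    (properPowerGraph (Equiv.Perm (Fin n))).Reachable ⟨c3 x y z, c3_ne_one hxy hxz hyz⟩
      ⟨swap u v, swap_ne huv⟩ := by
  have hcard : ({x, y, z} : Finset (Fin n)).card + 2 ≤ n := by
    have h1 := Finset.card_insert_le x ({y, z} : Finset (Fin n))
    have h2 := Finset.card_insert_le y ({z} : Finset (Fin n))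
    simp only [Finset.card_singleton] at h1 h2
    omega
  obtain ⟨a, b, hab, ha, hb⟩ := exists_fresh2 _ hcard
  simp only [Finset.mem_insert, Finset.mem_singleton] at ha hb
  push_neg at ha hb
  exact ((reach_swap_c3 hab hxy hxz hyz (Ne.symm ha.1) (Ne.symm hb.1) (Ne.symm ha.2.1)
    (Ne.symm hb.2.1) (Ne.symm ha.2.2) (Ne.symm hb.2.2)).symm).trans
    (reach_swap_swap hn hab huv)

lemma reach_fix_odd {σ : Equiv.Perm (Fin n)} {p : ℕ} (hσ : σ ≠ 1) (hp : σ ^ p = 1)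
    (hodd : p % 2 = 1) {x y : Fin n} (hxy : x ≠ y) (hx : σ x = x) (hy : σ y = y) :
    (properPowerGraph (Equiv.Perm (Fin n))).Reachable ⟨σ, hσ⟩ ⟨swap x y, swap_ne hxy⟩ := by
  set t := swap x y with hts
  have hdisj : Equiv.Perm.Disjoint σ t := by
    intro w
    by_cases hw : w = x ∨ w = y
    · left; rcases hw with rfl | rfl <;> assumption
    · right; push_neg at hw; exact swap_apply_of_ne_of_ne hw.1 hw.2
  have hcomm : Commute σ t := hdisj.commute
  set τ := σ * t with hτ
  have ht2 : t ^ 2 = 1 := swap_sq x y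
  have hτp1 : τ ^ (p + 1) = σ := by
    rw [hτ, hcomm.mul_pow, pow_succ, hp, one_mul, pow_eq_pow_mod' ht2 (p + 1),
      Nat.add_mod, hodd]
    norm_num
  have hτp : τ ^ p = t := by
    rw [hτ, hcomm.mul_pow, hp, one_mul, pow_eq_pow_mod' ht2 p, hodd, pow_one]
  have hτne : τ ≠ 1 := by
    apply ne_one_of_apply (x := x)
    rw [hτ, Equiv.Perm.mul_apply, hts, swap_apply_left, hy]
    exact hxy.symm
  exact (reach_of_pow hσ hτne hτp1.symm).trans (reach_of_pow (swap_ne hxy) hτne hτp.symm).symm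

lemma reach_invol_fix3 {σ : Equiv.Perm (Fin n)} (hσ : σ ≠ 1) (h2 : σ ^ 2 = 1)
    {x y z : Fin n} (hxy : x ≠ y) (hxz : x ≠ z) (hyz : y ≠ z)
    (hx : σ x = x) (hy : σ y = y) (hz : σ z = z) :
    (properPowerGraph (Equiv.Perm (Fin n))).Reachable ⟨σ, hσ⟩
      ⟨c3 x y z, c3_ne_one hxy hxz hyz⟩ := by
  set c := c3 x y z with hcs
  have hdisj : Equiv.Perm.Disjoint σ c := by
    intro w
    by_cases hw : w = x ∨ w = y ∨ w = z
    · left; rcases hw with rfl | rfl | rfl <;> assumption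
    · right; push_neg at hw; exact c3_fix hw.1 hw.2.1 hw.2.2
  have hcomm : Commute σ c := hdisj.commute
  set τ := σ * c with hτ
  have hc3 : c ^ 3 = 1 := c3_pow3 hxy hxz hyz
  have hτ3 : τ ^ 3 = σ := by
    rw [hτ, hcomm.mul_pow, pow_eq_pow_mod' h2 3, pow_eq_pow_mod' hc3 3]
    norm_num
  have hτ4 : τ ^ 4 = c := by
    rw [hτ, hcomm.mul_pow, pow_eq_pow_mod' h2 4, pow_eq_pow_mod' hc3 4]
    norm_num
  have hτne : τ ≠ 1 := by
    apply ne_one_of_apply (x := x)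
    rw [hτ, Equiv.Perm.mul_apply, hcs, c3_apply_x hxy hxz hyz, hy]
    exact hxy.symm
  exact (reach_of_pow hσ hτne hτ3.symm).trans
    (reach_of_pow (c3_ne_one hxy hxz hyz) hτne hτ4.symm).symm


set_option maxHeartbeats 2000000 in
lemma reach_invol (hn : 8 ≤ n) {σ : Equiv.Perm (Fin n)} (hσ : σ ≠ 1) (h2 : σ ^ 2 = 1)
    {u v : Fin n} (huv : u ≠ v) :
    (properPowerGraph (Equiv.Perm (Fin n))).Reachable ⟨σ, hσ⟩ ⟨swap u v, swap_ne huv⟩ := by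
  have hn7 : 7 ≤ n := by omega
  have hinv : ∀ w, σ (σ w) = w := by
    intro w
    have := Equiv.ext_iff.mp h2 w
    simpa [pow_two] using this
  by_cases hfix : ∃ x y z : Fin n, (x ≠ y ∧ x ≠ z ∧ y ≠ z) ∧ σ x = x ∧ σ y = y ∧ σ z = z
  · obtain ⟨x, y, z, ⟨hxy, hxz, hyz⟩, hx, hy, hz⟩ := hfix
    exact (reach_invol_fix3 hσ h2 hxy hxz hyz hx hy hz).trans
      (reach_c3_swap hn7 hxy hxz hyz huv)
  · -- support has at least 6 elements
    have hsupp : 6 ≤ σ.support.card := by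
      have hcompl : σ.supportᶜ.card ≤ 2 := by
        by_contra hc
        push_neg at hc
        obtain ⟨x, y, z, hx, hy, hz, hxy, hxz, hyz⟩ := Finset.two_lt_card_iff.mp hc
        simp only [Finset.mem_compl, Equiv.Perm.mem_support, not_not] at hx hy hz
        exact hfix ⟨x, y, z, ⟨hxy, hxz, hyz⟩, hx, hy, hz⟩
      have hcc := Finset.card_compl (σ.support) (α := Fin n)
      simp only [Fintype.card_fin] at hcc
      omega
    obtain ⟨x1, hx1⟩ : ∃ x, x ∈ σ.support := by
      obtain ⟨x, hx⟩ := Finset.card_pos.mp (show 0 < σ.support.card by omega)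
      exact ⟨x, hx⟩
    have hx1' : σ x1 ≠ x1 := Equiv.Perm.mem_support.mp hx1
    set y1 := σ x1 with hy1
    have hσy1 : σ y1 = x1 := hinv x1
    have hy1x1 : y1 ≠ x1 := hx1'
    obtain ⟨x2, hx2mem⟩ : (σ.support \ {x1, y1}).Nonempty := by
      apply Finset.card_pos.mp
      have hle := Finset.le_card_sdiff ({x1, y1} : Finset (Fin n)) σ.support
      have hci := Finset.card_insert_le x1 ({y1} : Finset (Fin n))
      simp only [Finset.card_singleton] at hci
      omega
    obtain ⟨hx2, hx2'⟩ := Finset.mem_sdiff.mp hx2mem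
    simp only [Finset.mem_insert, Finset.mem_singleton] at hx2'
    push_neg at hx2'
    obtain ⟨hx2x1, hx2y1⟩ := hx2'
    have hx2ne : σ x2 ≠ x2 := Equiv.Perm.mem_support.mp hx2
    set y2 := σ x2 with hy2
    have hσy2 : σ y2 = x2 := hinv x2
    have hy2x2 : y2 ≠ x2 := hx2ne
    have hy2x1 : y2 ≠ x1 := by
      intro h
      apply hx2y1
      rw [← hσy2, h, ← hy1]
    have hy2y1 : y2 ≠ y1 := by
      intro h
      apply hx2x1
      rw [← hσy2, h, hσy1]
    obtain ⟨x3, hx3mem⟩ : (σ.support \ {x1, y1, x2, y2}).Nonempty := by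
      apply Finset.card_pos.mp
      have hle := Finset.le_card_sdiff ({x1, y1, x2, y2} : Finset (Fin n)) σ.support
      have hc1 := Finset.card_insert_le x1 ({y1, x2, y2} : Finset (Fin n))
      have hc2 := Finset.card_insert_le y1 ({x2, y2} : Finset (Fin n))
      have hc3 := Finset.card_insert_le x2 ({y2} : Finset (Fin n))
      simp only [Finset.card_singleton] at hc1 hc2 hc3
      omega
    obtain ⟨hx3, hx3'⟩ := Finset.mem_sdiff.mp hx3mem
    simp only [Finset.mem_insert, Finset.mem_singleton] at hx3'
    push_neg at hx3'
    obtain ⟨hx3x1, hx3y1, hx3x2, hx3y2⟩ := hx3'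
    have hx3ne : σ x3 ≠ x3 := Equiv.Perm.mem_support.mp hx3
    set y3 := σ x3 with hy3
    have hσy3 : σ y3 = x3 := hinv x3
    have hy3x3 : y3 ≠ x3 := hx3ne
    have hy3x1 : y3 ≠ x1 := by
      intro h; apply hx3y1; rw [← hσy3, h, ← hy1]
    have hy3y1 : y3 ≠ y1 := by
      intro h; apply hx3x1; rw [← hσy3, h, hσy1]
    have hy3x2 : y3 ≠ x2 := by
      intro h; apply hx3y2; rw [← hσy3, h, ← hy2]
    have hy3y2 : y3 ≠ y2 := by
      intro h; apply hx3x2; rw [← hσy3, h, hσy2]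
    -- the 6-cycle d
    have hnd : ([x1, x2, x3, y1, y2, y3] : List (Fin n)).Nodup := by
      simp [hx2x1.symm, hx3x1.symm, hx3x2.symm, hy1x1.symm, hy2x1.symm, hy3x1.symm,
        hx2y1, hy2x2.symm, hy3x2.symm, hx3y1, hx3y2, hy3x3.symm,
        hy2y1.symm, hy3y1.symm, hy3y2.symm, hy1x1, hy2x2, hy3x3, hx2x1, hx3x1, hx3x2,
        hy2x1, hy3x1, hy2y1, hy3y1, hy3x2, hy3y2]
    have hd6 : formPerm [x1, x2, x3, y1, y2, y3] ^ 6 = 1 := by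
      have h4 := formPerm_pow_length_eq_one_of_nodup (l := [x1, x2, x3, y1, y2, y3]) hnd
      norm_num at h4
      exact h4
    have hval : ∀ k i : ℕ, ∀ _ : i < 6, ∀ w : Fin n,
        ([x1, x2, x3, y1, y2, y3] : List (Fin n))[i]'(by norm_num; omega) = w →
        ∀ j : ℕ, ∀ _ : j < 6, ([x1, x2, x3, y1, y2, y3] : List (Fin n))[j]'(by norm_num; omega)
          = ([x1, x2, x3, y1, y2, y3] : List (Fin n))[(i + k) % 6]'(by
            norm_num; omega) →
        True := fun _ _ _ _ _ _ _ _ => trivial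
    clear hval
    have hdx1 : formPerm [x1, x2, x3, y1, y2, y3] x1 = x2 := by
      have h := formPerm_pow_apply_getElem [x1, x2, x3, y1, y2, y3] hnd 1 0 (by norm_num)
      simp only [List.length_cons, List.length_nil] at h
      norm_num at h
      exact h
    have hd2x1 : (formPerm [x1, x2, x3, y1, y2, y3] ^ 2) x1 = x3 := by
      have h := formPerm_pow_apply_getElem [x1, x2, x3, y1, y2, y3] hnd 2 0 (by norm_num)
      simp only [List.length_cons, List.length_nil] at h
      norm_num at h
      exact h
    have hd3x1 : (formPerm [x1, x2, x3, y1, y2, y3] ^ 3) x1 = y1 := by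
      have h := formPerm_pow_apply_getElem [x1, x2, x3, y1, y2, y3] hnd 3 0 (by norm_num)
      simp only [List.length_cons, List.length_nil] at h
      norm_num at h
      exact h
    have hd3x2 : (formPerm [x1, x2, x3, y1, y2, y3] ^ 3) x2 = y2 := by
      have h := formPerm_pow_apply_getElem [x1, x2, x3, y1, y2, y3] hnd 3 1 (by norm_num)
      simp only [List.length_cons, List.length_nil] at h
      norm_num at h
      exact h
    have hd3x3 : (formPerm [x1, x2, x3, y1, y2, y3] ^ 3) x3 = y3 := by
      have h := formPerm_pow_apply_getElem [x1, x2, x3, y1, y2, y3] hnd 3 2 (by norm_num)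
      simp only [List.length_cons, List.length_nil] at h
      norm_num at h
      exact h
    have hd3y1 : (formPerm [x1, x2, x3, y1, y2, y3] ^ 3) y1 = x1 := by
      have h := formPerm_pow_apply_getElem [x1, x2, x3, y1, y2, y3] hnd 3 3 (by norm_num)
      simp only [List.length_cons, List.length_nil] at h
      norm_num at h
      exact h
    have hd3y2 : (formPerm [x1, x2, x3, y1, y2, y3] ^ 3) y2 = x2 := by
      have h := formPerm_pow_apply_getElem [x1, x2, x3, y1, y2, y3] hnd 3 4 (by norm_num)
      simp only [List.length_cons, List.length_nil] at h
      norm_num at h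
      exact h
    have hd3y3 : (formPerm [x1, x2, x3, y1, y2, y3] ^ 3) y3 = x3 := by
      have h := formPerm_pow_apply_getElem [x1, x2, x3, y1, y2, y3] hnd 3 5 (by norm_num)
      simp only [List.length_cons, List.length_nil] at h
      norm_num at h
      exact h
    have hdout : ∀ w : Fin n, w ∉ ([x1, x2, x3, y1, y2, y3] : List (Fin n)) →
        ∀ k, (formPerm [x1, x2, x3, y1, y2, y3] ^ k) w = w := by
      intro w hw k
      exact pow_fix (formPerm_apply_of_notMem hw) k
    have hσmem : ∀ w : Fin n, w ∉ ([x1, x2, x3, y1, y2, y3] : List (Fin n)) →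
        σ w ∉ ([x1, x2, x3, y1, y2, y3] : List (Fin n)) := by
      intro w hw hc
      apply hw
      simp only [List.mem_cons, List.not_mem_nil, or_false] at hc ⊢
      rcases hc with h | h | h | h | h | h
      · exact Or.inr (Or.inr (Or.inr (Or.inl (σ.injective (h.trans hσy1.symm)))))
      · exact Or.inr (Or.inr (Or.inr (Or.inr (Or.inl (σ.injective (h.trans hσy2.symm))))))
      · exact Or.inr (Or.inr (Or.inr (Or.inr (Or.inr (σ.injective (h.trans hσy3.symm))))))
      · exact Or.inl (σ.injective (h.trans hy1))
      · exact Or.inr (Or.inl (σ.injective (h.trans hy2)))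
      · exact Or.inr (Or.inr (Or.inl (σ.injective (h.trans hy3))))
    set d := formPerm [x1, x2, x3, y1, y2, y3] with hd
    set rest := σ * d ^ 3 with hrest
    have hrest_mem : ∀ w ∈ ([x1, x2, x3, y1, y2, y3] : List (Fin n)), rest w = w := by
      intro w hw
      simp only [List.mem_cons, List.not_mem_nil, or_false] at hw
      rw [hrest, Equiv.Perm.mul_apply]
      rcases hw with rfl | rfl | rfl | rfl | rfl | rfl
      · rw [hd3x1, hσy1]
      · rw [hd3x2, hσy2]
      · rw [hd3x3, hσy3]
      · rw [hd3y1, ← hy1]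
      · rw [hd3y2, ← hy2]
      · rw [hd3y3, ← hy3]
    have hrest_out : ∀ w : Fin n, w ∉ ([x1, x2, x3, y1, y2, y3] : List (Fin n)) →
        rest w = σ w := by
      intro w hw
      rw [hrest, Equiv.Perm.mul_apply, hdout w hw 3]
    have hrest2 : rest ^ 2 = 1 := by
      ext w
      rw [pow_two, Equiv.Perm.mul_apply, Equiv.Perm.one_apply]
      by_cases hw : w ∈ ([x1, x2, x3, y1, y2, y3] : List (Fin n))
      · rw [hrest_mem w hw, hrest_mem w hw]
      · rw [hrest_out w hw, hrest_out (σ w) (hσmem w hw), hinv]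
    have hdisj : Equiv.Perm.Disjoint d rest := by
      intro w
      by_cases hw : w ∈ ([x1, x2, x3, y1, y2, y3] : List (Fin n))
      · right; exact hrest_mem w hw
      · left; rw [hd]; exact formPerm_apply_of_notMem hw
    have hcomm : Commute d rest := hdisj.commute
    set α := d * rest with hα
    have hα3 : α ^ 3 = σ := by
      rw [hα, hcomm.mul_pow, pow_eq_pow_mod' hrest2 3]
      norm_num
      ext w
      rw [Equiv.Perm.mul_apply]
      by_cases hw : w ∈ ([x1, x2, x3, y1, y2, y3] : List (Fin n))
      · rw [hrest_mem w hw]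
        simp only [List.mem_cons, List.not_mem_nil, or_false] at hw
        rcases hw with rfl | rfl | rfl | rfl | rfl | rfl
        · rw [hd3x1, hy1]
        · rw [hd3x2, hy2]
        · rw [hd3x3, hy3]
        · rw [hd3y1, hσy1]
        · rw [hd3y2, hσy2]
        · rw [hd3y3, hσy3]
      · rw [hrest_out w hw, hdout (σ w) (hσmem w hw) 3]
    have hα2 : α ^ 2 = d ^ 2 := by
      rw [hα, hcomm.mul_pow, hrest2, mul_one]
    have hαne : α ≠ 1 := by
      apply ne_one_of_apply (x := x1)
      rw [hα, Equiv.Perm.mul_apply, hrest_mem x1 (by simp), hdx1]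
      exact hx2x1
    have hd2ne : d ^ 2 ≠ 1 := by
      apply ne_one_of_apply (x := x1)
      rw [hd2x1]
      exact hx3x1
    have hd23 : (d ^ 2) ^ 3 = 1 := by
      rw [← pow_mul]
      exact hd6
    -- two fixed points of d ^ 2
    obtain ⟨a, b, hab, ha, hb⟩ :=
      exists_fresh2 (([x1, x2, x3, y1, y2, y3] : List (Fin n)).toFinset)
        (by
          have := List.toFinset_card_le ([x1, x2, x3, y1, y2, y3] : List (Fin n))
          simp only [List.length_cons, List.length_nil] at this
          omega)
    rw [List.mem_toFinset] at ha hb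
    have hfa : (d ^ 2) a = a := hdout a ha 2
    have hfb : (d ^ 2) b = b := hdout b hb 2
    -- assemble the path
    have r1 : (properPowerGraph (Equiv.Perm (Fin n))).Reachable ⟨σ, hσ⟩ ⟨α, hαne⟩ :=
      reach_of_pow hσ hαne hα3.symm
    have r2 : (properPowerGraph (Equiv.Perm (Fin n))).Reachable ⟨d ^ 2, hd2ne⟩ ⟨α, hαne⟩ :=
      reach_of_pow hd2ne hαne hα2.symm
    have r3 := reach_fix_odd (n := n) hd2ne hd23 (by norm_num) hab hfa hfb
    exact ((r1.trans r2.symm).trans r3).trans (reach_swap_swap hn7 hab huv)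


lemma factor_pow_eq_one {σ c : Equiv.Perm (Fin n)} (hc : c ∈ σ.cycleFactorsFinset)
    {p : ℕ} (hσp : σ ^ p = 1) : c ^ p = 1 := by
  have hag := (Equiv.Perm.mem_cycleFactorsFinset_iff.mp hc).2
  have key : ∀ k : ℕ, ∀ x ∈ c.support, (c ^ k) x = (σ ^ k) x := by
    intro k
    induction k with
    | zero => simp
    | succ k ih =>
      intro x hx
      have hmem : (c ^ k) x ∈ c.support := Equiv.Perm.pow_apply_mem_support.mpr hx
      rw [pow_succ', pow_succ', Equiv.Perm.mul_apply, Equiv.Perm.mul_apply,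
        hag _ hmem, ih x hx]
  ext x
  by_cases hx : x ∈ c.support
  · rw [key p x hx, hσp]
  · rw [pow_fix (Equiv.Perm.notMem_support.mp hx) p]
    rfl

lemma support_pow_prime {c : Equiv.Perm (Fin n)} {p : ℕ} (hp : p.Prime) (hcp : c ^ p = 1)
    (hc1 : c ≠ 1) {m : ℕ} (hm : ¬ p ∣ m) : (c ^ m).support = c.support := by
  haveI := Fact.mk hp
  have ho : orderOf c = p := orderOf_eq_prime hcp hc1
  apply Equiv.Perm.support_pow_coprime
  rw [ho]
  exact (hp.coprime_iff_not_dvd.mpr hm).symm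

lemma orbit_inj {c : Equiv.Perm (Fin n)} {p : ℕ} (hp : p.Prime) (hcp : c ^ p = 1)
    (hc1 : c ≠ 1) {a : Fin n} (ha : a ∈ c.support) :
    ∀ i j : ℕ, i < p → j < p → (c ^ i) a = (c ^ j) a → i = j := by
  have main : ∀ i j : ℕ, i ≤ j → j < p → (c ^ i) a = (c ^ j) a → i = j := by
    intro i j hij hj h
    by_contra hne
    have hlt : 0 < j - i := by omega
    have hsplit : c ^ j = c ^ i * c ^ (j - i) := by
      rw [← pow_add]
      congr 1
      omega
    rw [hsplit, Equiv.Perm.mul_apply] at h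
    have h2 : (c ^ (j - i)) a = a := Equiv.injective _ h.symm
    have hnd : ¬ p ∣ (j - i) := by
      intro hdvd
      have := Nat.le_of_dvd hlt hdvd
      omega
    have hmem : a ∈ (c ^ (j - i)).support := by
      rw [support_pow_prime hp hcp hc1 hnd]
      exact ha
    exact (Equiv.Perm.mem_support.mp hmem) h2
  intro i j hi hj h
  rcases le_total i j with hle | hle
  · exact main i j hle hj h
  · exact (main j i hle hi h.symm).symm

lemma orbit_cover {c : Equiv.Perm (Fin n)} {p : ℕ} (hcyc : c.IsCycle) (hcp : c ^ p = 1)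
    (hodd : p % 2 = 1) {a x : Fin n} (ha : a ∈ c.support) (hx : x ∈ c.support) :
    ∃ t, t < p ∧ (c ^ (2 * t)) a = x := by
  obtain ⟨i, hi⟩ := hcyc.exists_pow_eq (Equiv.Perm.mem_support.mp ha)
    (Equiv.Perm.mem_support.mp hx)
  have hp0 : 0 < p := by omega
  refine ⟨(i * ((p + 1) / 2)) % p, Nat.mod_lt _ hp0, ?_⟩
  have hme : 2 * ((i * ((p + 1) / 2)) % p) ≡ i [MOD p] := by
    calc 2 * ((i * ((p + 1) / 2)) % p) ≡ 2 * (i * ((p + 1) / 2)) [MOD p] :=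
          Nat.ModEq.mul_left 2 (Nat.mod_modEq _ p)
      _ = i * (p + 1) := by
          rw [mul_comm 2, mul_assoc]
          congr 1
          omega
      _ ≡ i * 1 [MOD p] := Nat.ModEq.mul_left i (Nat.add_mod_left p 1)
      _ = i := mul_one i
  rw [pow_eq_pow_mod' hcp (2 * _), hme, ← pow_eq_pow_mod' hcp i, hi]

lemma conj_cancel {G : Type*} [Group G] {a b s : G} (h1 : Commute a s) (h2 : Commute b s)
    (h3 : Commute a b) : a * b * (s * a⁻¹ * b⁻¹) = s := by
  have hC : Commute (a⁻¹ * b⁻¹) s := Commute.mul_left h1.inv_left h2.inv_left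
  have h4 : b * a⁻¹ = a⁻¹ * b := (h3.symm.inv_right).eq
  calc a * b * (s * a⁻¹ * b⁻¹) = a * b * (a⁻¹ * b⁻¹ * s) := by
        rw [mul_assoc s, hC.symm.eq]
    _ = a * (b * a⁻¹) * b⁻¹ * s := by group
    _ = a * (a⁻¹ * b) * b⁻¹ * s := by rw [h4]
    _ = s := by group


set_option maxHeartbeats 2000000 in
lemma reach_odd (hn : 8 ≤ n) (h1 : ¬ n.Prime) (h2 : ¬ (n - 1).Prime)
    {σ : Equiv.Perm (Fin n)} (hσ : σ ≠ 1) {p : ℕ} (hp : p.Prime) (hodd : p % 2 = 1)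
    (hσp : σ ^ p = 1) {u v : Fin n} (huv : u ≠ v) :
    (properPowerGraph (Equiv.Perm (Fin n))).Reachable ⟨σ, hσ⟩ ⟨swap u v, swap_ne huv⟩ := by
  have hn7 : 7 ≤ n := by omega
  have hp3 : 3 ≤ p := by
    have := hp.two_le
    omega
  by_cases hfix : ∃ x y : Fin n, x ≠ y ∧ σ x = x ∧ σ y = y
  · obtain ⟨x, y, hxy, hx, hy⟩ := hfix
    exact (reach_fix_odd hσ hσp hodd hxy hx hy).trans (reach_swap_swap hn7 hxy huv)
  · have hsupp : n - 1 ≤ σ.support.card := by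
      have hcompl : σ.supportᶜ.card ≤ 1 := by
        by_contra hc
        push_neg at hc
        obtain ⟨x, hx, y, hy, hxy⟩ := Finset.one_lt_card.mp hc
        simp only [Finset.mem_compl, Equiv.Perm.mem_support, not_not] at hx hy
        exact hfix ⟨x, y, hxy, hx, hy⟩
      have hcc := Finset.card_compl (σ.support) (α := Fin n)
      simp only [Fintype.card_fin] at hcc
      omega
    obtain ⟨c1, hc1⟩ : ∃ c, c ∈ σ.cycleFactorsFinset := by
      by_contra hc
      push_neg at hc
      apply hσ
      rw [← Equiv.Perm.cycleFactorsFinset_eq_empty_iff]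
      exact Finset.eq_empty_iff_forall_notMem.mpr hc
    have hcyc1 : c1.IsCycle := (Equiv.Perm.mem_cycleFactorsFinset_iff.mp hc1).1
    have hag1 : ∀ x ∈ c1.support, c1 x = σ x := (Equiv.Perm.mem_cycleFactorsFinset_iff.mp hc1).2
    have hc1p : c1 ^ p = 1 := factor_pow_eq_one hc1 hσp
    have hc1ne : c1 ≠ 1 := hcyc1.ne_one
    haveI hfact : Fact p.Prime := ⟨hp⟩
    have hord1 : orderOf c1 = p := orderOf_eq_prime hc1p hc1ne
    have hcard1 : c1.support.card = p := by rw [← hcyc1.orderOf, hord1]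
    obtain ⟨c2, hc2, hne12⟩ : ∃ c2 ∈ σ.cycleFactorsFinset, c2 ≠ c1 := by
      by_contra hc
      push_neg at hc
      have hsing : σ.cycleFactorsFinset = {c1} :=
        Finset.eq_singleton_iff_unique_mem.mpr ⟨hc1, hc⟩
      obtain ⟨-, heq⟩ := Equiv.Perm.cycleFactorsFinset_eq_singleton_iff.mp hsing
      have hcardσ : σ.support.card = p := by rw [heq]; exact hcard1
      have hle : σ.support.card ≤ n := by
        have := Finset.card_le_univ σ.support
        simpa using this
      have hpn : p = n - 1 ∨ p = n := by omega
      rcases hpn with h | h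
      · exact h2 (h ▸ hp)
      · exact h1 (h ▸ hp)
    have hcyc2 : c2.IsCycle := (Equiv.Perm.mem_cycleFactorsFinset_iff.mp hc2).1
    have hag2 : ∀ x ∈ c2.support, c2 x = σ x := (Equiv.Perm.mem_cycleFactorsFinset_iff.mp hc2).2
    have hc2p : c2 ^ p = 1 := factor_pow_eq_one hc2 hσp
    have hc2ne : c2 ≠ 1 := hcyc2.ne_one
    have hdisj12 : Equiv.Perm.Disjoint c1 c2 :=
      (Equiv.Perm.cycleFactorsFinset_pairwise_disjoint σ) (Finset.mem_coe.mpr hc1)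
        (Finset.mem_coe.mpr hc2) (fun h => hne12 h.symm)
    have hsuppdisj : _root_.Disjoint c1.support c2.support :=
      Equiv.Perm.disjoint_iff_disjoint_support.mp hdisj12
    obtain ⟨a, ha', -⟩ := id hcyc1
    have ha : a ∈ c1.support := Equiv.Perm.mem_support.mpr ha'
    obtain ⟨b, hb', -⟩ := id hcyc2
    have hb : b ∈ c2.support := Equiv.Perm.mem_support.mpr hb'
    have hcomm1 : Commute c1 σ := Equiv.Perm.self_mem_cycle_factors_commute hc1
    have hcomm2 : Commute c2 σ := Equiv.Perm.self_mem_cycle_factors_commute hc2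
    have hcomm12 : Commute c1 c2 :=
      Equiv.Perm.cycleFactorsFinset_mem_commute σ (Finset.mem_coe.mpr hc1)
        (Finset.mem_coe.mpr hc2) hne12.symm
    set ff : ℕ → Fin n := fun j => if j % 2 = 0 then (c1 ^ j) a else (c2 ^ (j - 1)) b with hff
    have hffeven : ∀ j, j % 2 = 0 → ff j = (c1 ^ j) a := by
      intro j hj
      rw [hff]
      simp [hj]
    have hffodd : ∀ j, j % 2 = 1 → ff j = (c2 ^ (j - 1)) b := by
      intro j hj
      rw [hff]
      simp [hj]
    have hmem1 : ∀ j, j % 2 = 0 → ff j ∈ c1.support := by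
      intro j hj
      rw [hffeven j hj]
      exact Equiv.Perm.pow_apply_mem_support.mpr ha
    have hmem2 : ∀ j, j % 2 = 1 → ff j ∈ c2.support := by
      intro j hj
      rw [hffodd j hj]
      exact Equiv.Perm.pow_apply_mem_support.mpr hb
    have hnotin2 : ∀ x ∈ c1.support, x ∉ c2.support := fun x hx hx2 =>
      Finset.disjoint_left.mp hsuppdisj hx hx2
    have hnotin1 : ∀ x ∈ c2.support, x ∉ c1.support := fun x hx hx2 =>
      Finset.disjoint_left.mp hsuppdisj hx2 hx
    have hcop : Nat.Coprime 2 p := (Nat.prime_two.coprime_iff_not_dvd).mpr (by omega)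
    have hinj : ∀ i ∈ List.range (2 * p), ∀ j ∈ List.range (2 * p), ff i = ff j → i = j := by
      intro i hi j hj h
      rw [List.mem_range] at hi hj
      rcases Nat.mod_two_eq_zero_or_one i with hi2 | hi2 <;>
        rcases Nat.mod_two_eq_zero_or_one j with hj2 | hj2
      · rw [hffeven i hi2, hffeven j hj2, pow_eq_pow_mod' hc1p i, pow_eq_pow_mod' hc1p j] at h
        have hmodp : i % p = j % p :=
          orbit_inj hp hc1p hc1ne ha _ _ (Nat.mod_lt _ hp.pos) (Nat.mod_lt _ hp.pos) h
        have hfull : i ≡ j [MOD 2 * p] :=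
          (Nat.modEq_and_modEq_iff_modEq_mul hcop).mp ⟨show i % 2 = j % 2 by omega, hmodp⟩
        rwa [Nat.ModEq, Nat.mod_eq_of_lt hi, Nat.mod_eq_of_lt hj] at hfull
      · exact absurd (h ▸ hmem2 j hj2) (hnotin2 _ (hmem1 i hi2))
      · exact absurd (h.symm ▸ hmem2 i hi2) (hnotin2 _ (hmem1 j hj2))
      · rw [hffodd i hi2, hffodd j hj2, pow_eq_pow_mod' hc2p (i - 1),
          pow_eq_pow_mod' hc2p (j - 1)] at h
        have hmodp : (i - 1) % p = (j - 1) % p :=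
          orbit_inj hp hc2p hc2ne hb _ _ (Nat.mod_lt _ hp.pos) (Nat.mod_lt _ hp.pos) h
        have hmp : i ≡ j [MOD p] := by
          have hstep := Nat.ModEq.add_right 1 (hmodp : (i - 1) ≡ (j - 1) [MOD p])
          rwa [Nat.sub_add_cancel (by omega), Nat.sub_add_cancel (by omega)] at hstep
        have hfull : i ≡ j [MOD 2 * p] :=
          (Nat.modEq_and_modEq_iff_modEq_mul hcop).mp ⟨show i % 2 = j % 2 by omega, hmp⟩
        rwa [Nat.ModEq, Nat.mod_eq_of_lt hi, Nat.mod_eq_of_lt hj] at hfull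
    have hnodup : ((List.range (2 * p)).map ff).Nodup := (List.nodup_range).map_on hinj
    have hkey : ∀ k j : ℕ, j < 2 * p →
        (formPerm ((List.range (2 * p)).map ff) ^ k) (ff j) = ff ((j + k) % (2 * p)) := by
      intro k j hj
      have h := formPerm_pow_apply_getElem ((List.range (2 * p)).map ff) hnodup k j
        (by simpa using hj)
      simpa using h
    have hd2p : formPerm ((List.range (2 * p)).map ff) ^ (2 * p) = 1 := by
      have h := formPerm_pow_length_eq_one_of_nodup _ hnodup
      simpa using h
    have hcov : ∀ x : Fin n, x ∉ (List.range (2 * p)).map ff →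
        x ∉ c1.support ∧ x ∉ c2.support := by
      intro x hx
      constructor
      · intro hxs
        obtain ⟨t, ht, hta⟩ := orbit_cover hcyc1 hc1p hodd ha hxs
        apply hx
        rw [List.mem_map]
        refine ⟨2 * t, by rw [List.mem_range]; omega, ?_⟩
        rw [hffeven (2 * t) (by omega)]
        exact hta
      · intro hxs
        obtain ⟨t, ht, htb⟩ := orbit_cover hcyc2 hc2p hodd hb hxs
        apply hx
        rw [List.mem_map]
        refine ⟨2 * t + 1, by rw [List.mem_range]; omega, ?_⟩
        rw [hffodd (2 * t + 1) (by omega)]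
        simpa using htb
    have hmain : formPerm ((List.range (2 * p)).map ff) ^ (p + 1) = c1 * c2 := by
      ext x
      by_cases hx : x ∈ (List.range (2 * p)).map ff
      · rw [List.mem_map] at hx
        obtain ⟨j, hj, rfl⟩ := hx
        rw [List.mem_range] at hj
        rw [hkey (p + 1) j hj]
        have hmodp : (j + (p + 1)) % (2 * p) ≡ j + 1 [MOD p] := by
          have hstep : (j + (p + 1)) % (2 * p) ≡ j + (p + 1) [MOD p] :=
            Nat.ModEq.of_mul_left 2 (Nat.mod_modEq _ _)
          have hju : j + (p + 1) ≡ j + 1 [MOD p] := by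
            show (j + (p + 1)) % p = (j + 1) % p
            rw [show j + (p + 1) = j + 1 + p by omega, Nat.add_mod_right]
          exact hstep.trans hju
        rcases Nat.mod_two_eq_zero_or_one j with hj2 | hj2
        · have hm2 : ((j + (p + 1)) % (2 * p)) % 2 = 0 := by
            rw [Nat.mod_mod_of_dvd _ ⟨p, rfl⟩]
            omega
          rw [hffeven _ hm2, hffeven j hj2, Equiv.Perm.mul_apply]
          have hfix2 : c2 ((c1 ^ j) a) = (c1 ^ j) a :=
            Equiv.Perm.notMem_support.mp (hnotin2 _ (Equiv.Perm.pow_apply_mem_support.mpr ha))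
          rw [hfix2, pow_eq_pow_mod' hc1p ((j + (p + 1)) % (2 * p)), hmodp,
            ← pow_eq_pow_mod' hc1p (j + 1), pow_succ', Equiv.Perm.mul_apply]
        · have hm2 : ((j + (p + 1)) % (2 * p)) % 2 = 1 := by
            rw [Nat.mod_mod_of_dvd _ ⟨p, rfl⟩]
            omega
          rw [hffodd _ hm2, hffodd j hj2, Equiv.Perm.mul_apply]
          have hstep : c2 ((c2 ^ (j - 1)) b) = (c2 ^ j) b := by
            rw [← Equiv.Perm.mul_apply, ← pow_succ']
            congr 2
            omega
          rw [hstep]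
          have hfix1 : c1 ((c2 ^ j) b) = (c2 ^ j) b :=
            Equiv.Perm.notMem_support.mp (hnotin1 _ (Equiv.Perm.pow_apply_mem_support.mpr hb))
          rw [hfix1]
          have hmodp' : ((j + (p + 1)) % (2 * p)) - 1 ≡ j [MOD p] := by
            apply Nat.ModEq.add_right_cancel' 1
            rw [Nat.sub_add_cancel (by omega)]
            exact hmodp
          rw [pow_eq_pow_mod' hc2p (((j + (p + 1)) % (2 * p)) - 1), hmodp',
            ← pow_eq_pow_mod' hc2p j]
      · rw [pow_fix (formPerm_apply_of_notMem hx) (p + 1), Equiv.Perm.mul_apply]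
        obtain ⟨hx1, hx2⟩ := hcov x hx
        rw [Equiv.Perm.notMem_support.mp hx2, Equiv.Perm.notMem_support.mp hx1]
    have hff0 : ff 0 = a := by
      rw [hffeven 0 rfl]
      simp
    have hdpa : (formPerm ((List.range (2 * p)).map ff) ^ p) a = (c2 ^ (p - 1)) b := by
      have h := hkey p 0 (by omega)
      rw [hff0] at h
      rw [h, Nat.zero_add, Nat.mod_eq_of_lt (by omega)]
      exact hffodd p hodd
    have hdpne : formPerm ((List.range (2 * p)).map ff) ^ p ≠ 1 := by
      apply ne_one_of_apply (x := a)
      rw [hdpa]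
      intro hcon
      have hmem : (c2 ^ (p - 1)) b ∈ c2.support := Equiv.Perm.pow_apply_mem_support.mpr hb
      rw [hcon] at hmem
      exact hnotin2 a ha hmem
    have hdp2 : (formPerm ((List.range (2 * p)).map ff) ^ p) ^ 2 = 1 := by
      rw [← pow_mul, show p * 2 = 2 * p by ring]
      exact hd2p
    set rest := σ * c1⁻¹ * c2⁻¹ with hrest
    have hrestp : rest ^ p = 1 := by
      have hA : Commute σ c1⁻¹ := hcomm1.symm.inv_right
      have hB : Commute (σ * c1⁻¹) c2⁻¹ :=
        Commute.mul_left hcomm2.symm.inv_right (hcomm12.inv_left.inv_right)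
      rw [hrest, hB.mul_pow, hA.mul_pow, inv_pow, inv_pow, hσp, hc1p, hc2p]
      simp
    have hrestfix : ∀ x : Fin n, (x ∈ c1.support ∨ x ∈ c2.support) → rest x = x := by
      intro x hx
      rw [hrest, Equiv.Perm.mul_apply, Equiv.Perm.mul_apply]
      rcases hx with hx | hx
      · have h2' : c2⁻¹ x = x := by
          apply Equiv.Perm.notMem_support.mp
          rw [Equiv.Perm.support_inv]
          exact hnotin2 x hx
        rw [h2']
        have hmemi : c1⁻¹ x ∈ c1.support := by
          have hxx : x ∈ (c1⁻¹).support := by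
            rw [Equiv.Perm.support_inv]
            exact hx
          have hap := Equiv.Perm.apply_mem_support.mpr hxx
          rwa [Equiv.Perm.support_inv] at hap
        rw [← hag1 _ hmemi]
        exact Equiv.apply_symm_apply c1 x
      · have hmemi2 : c2⁻¹ x ∈ c2.support := by
          have hxx : x ∈ (c2⁻¹).support := by
            rw [Equiv.Perm.support_inv]
            exact hx
          have hap := Equiv.Perm.apply_mem_support.mpr hxx
          rwa [Equiv.Perm.support_inv] at hap
        have h1' : c1⁻¹ (c2⁻¹ x) = c2⁻¹ x := by
          apply Equiv.Perm.notMem_support.mp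
          rw [Equiv.Perm.support_inv]
          exact hnotin1 _ hmemi2
        rw [h1', ← hag2 _ hmemi2]
        exact Equiv.apply_symm_apply c2 x
    have hdisjdr : Equiv.Perm.Disjoint (formPerm ((List.range (2 * p)).map ff)) rest := by
      intro x
      by_cases hx : x ∈ (List.range (2 * p)).map ff
      · right
        apply hrestfix
        rw [List.mem_map] at hx
        obtain ⟨j, hj, rfl⟩ := hx
        rcases Nat.mod_two_eq_zero_or_one j with hj2 | hj2
        · exact Or.inl (hmem1 j hj2)
        · exact Or.inr (hmem2 j hj2)
      · left
        exact formPerm_apply_of_notMem hx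
    have hcd : Commute (formPerm ((List.range (2 * p)).map ff)) rest := hdisjdr.commute
    have hrestp1 : rest ^ (p + 1) = rest := by
      rw [pow_succ, hrestp, one_mul]
    have hαp1 : (formPerm ((List.range (2 * p)).map ff) * rest) ^ (p + 1) = σ := by
      rw [hcd.mul_pow, hmain, hrestp1, hrest]
      exact conj_cancel hcomm1 hcomm2 hcomm12
    have hαp : (formPerm ((List.range (2 * p)).map ff) * rest) ^ p =
        formPerm ((List.range (2 * p)).map ff) ^ p := by
      rw [hcd.mul_pow, hrestp, mul_one]
    have hαne : formPerm ((List.range (2 * p)).map ff) * rest ≠ 1 := by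
      apply ne_one_of_apply (x := a)
      rw [Equiv.Perm.mul_apply, hrestfix a (Or.inl ha)]
      have h := hkey 1 0 (by omega)
      rw [hff0, pow_one] at h
      rw [h, Nat.zero_add, Nat.mod_eq_of_lt (by omega), hffodd 1 rfl]
      have hb0 : (c2 ^ (1 - 1)) b = b := by norm_num
      rw [hb0]
      intro hcon
      exact hnotin2 a ha (hcon ▸ hb)
    have r1 := reach_of_pow hσ hαne hαp1.symm
    have r2 := reach_of_pow hdpne hαne hαp.symm
    exact (r1.trans r2.symm).trans (reach_invol hn hdpne hdp2 huv)


lemma reach_all (hn : 8 ≤ n) (h1 : ¬ n.Prime) (h2 : ¬ (n - 1).Prime)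
    {σ : Equiv.Perm (Fin n)} (hσ : σ ≠ 1) {u v : Fin n} (huv : u ≠ v) :
    (properPowerGraph (Equiv.Perm (Fin n))).Reachable ⟨σ, hσ⟩ ⟨swap u v, swap_ne huv⟩ := by
  have hm1 : orderOf σ ≠ 1 := by
    rw [Ne, orderOf_eq_one_iff]
    exact hσ
  have hm0 : 0 < orderOf σ := orderOf_pos σ
  have hp : (orderOf σ).minFac.Prime := Nat.minFac_prime hm1
  have hdvd : (orderOf σ).minFac ∣ orderOf σ := Nat.minFac_dvd _
  have hk0 : 0 < orderOf σ / (orderOf σ).minFac :=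
    Nat.div_pos (Nat.le_of_dvd hm0 hdvd) hp.pos
  have hσ'p : (σ ^ (orderOf σ / (orderOf σ).minFac)) ^ (orderOf σ).minFac = 1 := by
    rw [← pow_mul, Nat.div_mul_cancel hdvd, pow_orderOf_eq_one]
  have hσ'ne : σ ^ (orderOf σ / (orderOf σ).minFac) ≠ 1 := by
    intro hcon
    have hdd := orderOf_dvd_of_pow_eq_one hcon
    have hlt : orderOf σ / (orderOf σ).minFac < orderOf σ :=
      Nat.div_lt_self hm0 hp.one_lt
    have := Nat.le_of_dvd hk0 hdd
    omega
  have r0 : (properPowerGraph (Equiv.Perm (Fin n))).Reachable ⟨σ, hσ⟩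
      ⟨σ ^ (orderOf σ / (orderOf σ).minFac), hσ'ne⟩ :=
    (reach_of_pow hσ'ne hσ rfl).symm
  rcases hp.eq_two_or_odd with h2' | hodd
  · have hσ'2 : (σ ^ (orderOf σ / (orderOf σ).minFac)) ^ 2 = 1 := by
      rw [← h2']
      exact hσ'p
    exact r0.trans (reach_invol hn hσ'ne hσ'2 huv)
  · exact r0.trans (reach_odd hn h1 h2 hσ'ne hp hodd hσ'p huv)

end PPG

theorem stmt_18 (n : ℕ) (hn : 8 ≤ n) (h1 : ¬ n.Prime) (h2 : ¬ (n - 1).Prime) :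
    (properPowerGraph (Equiv.Perm (Fin n))).Connected := by
  have h01 : (⟨0, by omega⟩ : Fin n) ≠ ⟨1, by omega⟩ := by
    intro h
    have := Fin.mk.injEq (n := n) 0 (by omega) 1 (by omega)
    simp_all
  rw [SimpleGraph.connected_iff]
  constructor
  · intro A B
    obtain ⟨σ, hσ⟩ := A
    obtain ⟨τ, hτ⟩ := B
    exact (PPG.reach_all hn h1 h2 hσ h01).trans (PPG.reach_all hn h1 h2 hτ h01).symm
  · exact ⟨⟨Equiv.swap ⟨0, by omega⟩ ⟨1, by omega⟩, PPG.swap_ne h01⟩⟩
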